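/- Let (X,ρ) be a compact pseudo-metric space with diameter Ω, d ∈ ℕ, and ρ₂ the normalized ℓ² pseudo-metric on X^d. Suppose Ω' ⊆ X is (ρ,√ε)-spanning for X. Let E ⊆ X^d be (ρ₂,ε)-spanning for a set Y ⊆ X^d, and let E' = { y^χ : y ∈ E, Λ ⊆ [d], |Λ| = ⌈εd⌉, χ : Λ → Ω' } where y^χ agrees with y off Λ and equals χ on Λ. Then E' is (ρ_∞, √ε)-spanning for Y. -/

import Mathlib

/-- If `Ω'` is `(ρ,√ε)`-spanning for `X` and `E` is `(ρ₂,ε)`-spanning for `Y ⊆ X^d`, then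
the set `E'` of all modifications of points of `E` on `⌈εd⌉` coordinates by values of `Ω'`
is `(ρ_∞,√ε)`-spanning for `Y`. -/
theorem stmt18 {S : Type*} (ρ : S → S → ℝ)
    (hnonneg : ∀ x y, 0 ≤ ρ x y) (hrefl : ∀ x, ρ x x = 0)
    (hsymm : ∀ x y, ρ x y = ρ y x)
    (htri : ∀ x y z, ρ x z ≤ ρ x y + ρ y z)
    (Ω : ℝ) (hdiam : ∀ x y, ρ x y ≤ Ω)
    (d : ℕ) (hd : 0 < d) (ε : ℝ) (hε0 : 0 < ε) (hε1 : ε ≤ 1)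
    (Ω' : Set S) (hΩ' : ∀ x : S, ∃ w ∈ Ω', ρ x w ≤ Real.sqrt ε)
    (Y E : Set (Fin d → S))
    (hE : ∀ z ∈ Y, ∃ y ∈ E,
      Real.sqrt ((1 / (d : ℝ)) * ∑ i, ρ (y i) (z i) ^ 2) ≤ ε) :
    ∀ z ∈ Y, ∃ y' ∈ {y' : Fin d → S | ∃ y ∈ E, ∃ Λ : Finset (Fin d),
        Λ.card = ⌈ε * (d : ℝ)⌉₊ ∧ (∀ i ∉ Λ, y' i = y i) ∧ ∀ i ∈ Λ, y' i ∈ Ω'},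
      ∀ i, ρ (y' i) (z i) ≤ Real.sqrt ε := by
  intro z hz
  obtain ⟨y, hyE, hy⟩ := hE z hz
  classical
  have hd0 : (0:ℝ) < d := by exact_mod_cast hd
  set B : Finset (Fin d) := Finset.univ.filter (fun i => Real.sqrt ε < ρ (y i) (z i)) with hB
  have hsnn : (0:ℝ) ≤ (1 / (d : ℝ)) * ∑ i, ρ (y i) (z i) ^ 2 := by
    positivity
  have hsq : (1 / (d : ℝ)) * ∑ i, ρ (y i) (z i) ^ 2 ≤ ε ^ 2 := by
    calc (1 / (d : ℝ)) * ∑ i, ρ (y i) (z i) ^ 2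
        = Real.sqrt ((1 / (d : ℝ)) * ∑ i, ρ (y i) (z i) ^ 2) ^ 2 := by
          rw [Real.sq_sqrt hsnn]
      _ ≤ ε ^ 2 := by
          apply pow_le_pow_left₀ (Real.sqrt_nonneg _) hy
  have hsum : ∑ i, ρ (y i) (z i) ^ 2 ≤ ε ^ 2 * d := by
    rw [div_mul_eq_mul_div, one_mul, div_le_iff₀ hd0] at hsq
    linarith
  have hBbound : (B.card : ℝ) * ε ≤ ε ^ 2 * d := by
    calc (B.card : ℝ) * ε = ∑ _i ∈ B, ε := by rw [Finset.sum_const, nsmul_eq_mul]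
      _ ≤ ∑ i ∈ B, ρ (y i) (z i) ^ 2 := by
          apply Finset.sum_le_sum
          intro i hi
          have hi' : Real.sqrt ε < ρ (y i) (z i) := by
            simpa [hB] using hi
          have : Real.sqrt ε ^ 2 ≤ ρ (y i) (z i) ^ 2 :=
            pow_le_pow_left₀ (Real.sqrt_nonneg _) hi'.le 2
          rwa [Real.sq_sqrt hε0.le] at this
      _ ≤ ∑ i, ρ (y i) (z i) ^ 2 := by
          apply Finset.sum_le_sum_of_subset_of_nonneg (Finset.filter_subset _ _)
          intro i _ _; positivity
      _ ≤ ε ^ 2 * d := hsum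
  have hBcard : (B.card : ℝ) ≤ ε * d := by
    have := (mul_le_mul_iff_of_pos_right hε0).mp (by linarith [hBbound] : (B.card : ℝ) * ε ≤ (ε * d) * ε)
    exact this
  have hBle : B.card ≤ ⌈ε * (d : ℝ)⌉₊ := by
    have : (B.card : ℝ) ≤ (⌈ε * (d : ℝ)⌉₊ : ℝ) := hBcard.trans (Nat.le_ceil _)
    exact_mod_cast this
  have hceil_le : ⌈ε * (d : ℝ)⌉₊ ≤ d := by
    apply Nat.ceil_le.mpr
    calc ε * (d : ℝ) ≤ 1 * d := by
          apply mul_le_mul_of_nonneg_right hε1 hd0.le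
      _ = d := one_mul _
  obtain ⟨Λ, hBΛ, hΛcard⟩ := Finset.exists_subsuperset_card_eq
    (B.subset_univ) hBle (by simpa using hceil_le)
  set χ : Fin d → S := fun i => Classical.choose (hΩ' (z i)) with hχ
  have hχspec : ∀ i, χ i ∈ Ω' ∧ ρ (z i) (χ i) ≤ Real.sqrt ε := fun i =>
    ⟨(Classical.choose_spec (hΩ' (z i))).1, (Classical.choose_spec (hΩ' (z i))).2⟩
  refine ⟨fun i => if i ∈ Λ then χ i else y i, ⟨y, hyE, Λ, hΛcard.2, ?_, ?_⟩, ?_⟩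
  · intro i hi; simp [hi]
  · intro i hi; simp [hi, (hχspec i).1]
  · intro i
    by_cases hi : i ∈ Λ
    · simp only [hi, if_true]
      rw [hsymm]
      exact (hχspec i).2
    · simp only [hi, if_false]
      have : i ∉ B := fun h => hi (hBΛ h)
      have : ¬ (Real.sqrt ε < ρ (y i) (z i)) := by
        intro h; exact this (by simp [hB, h])
      linarith [not_lt.mp this]
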